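/- arXiv:1601.02887 — 2 statements merged into one kernel-verified Lean document; each statement's English description precedes it below -/
import Mathlib

section
/- Let G(m, b, d) be a D3 graph with m ≥ 2. Then there exists a cycle in G(m, b, d) whose length equals the girth of G(m, b, d) and which passes through some vertex v of ZMod (2*m) with v.val < 2*b. In other words, the girth of the D3 graph is realized by a shortest cycle through one of the first 2b vertices. -/
/-- The chord/successor relation underlying the D3 graph: `y` follows `x` along the
Hamiltonian cycle, or `y` is reached from an odd-labelled `x` by the chord `d j`,
where `j` is the (unique) index with `x.val ≡ 2*j + 1 (mod 2*b)`. -/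
def d3Rel (m b : ℕ) (d : Fin b → ℕ) (x y : ZMod (2 * m)) : Prop :=
  y = x + 1 ∨
    (Odd x.val ∧ ∃ j : Fin b, x.val % (2 * b) = 2 * (j : ℕ) + 1 ∧ y = x + (d j : ZMod (2 * m)))

/-- The D3 graph `G(m, b, d)` of order `2*m` with symmetry factor `b` and
chord indices `d : Fin b → ℕ`: distinct vertices `x y : ZMod (2*m)` are adjacent iff
`y = x + 1`, or `y = x - 1`, or `x` is odd and `y = x + d j` for the unique `j` with
`x.val ≡ 2*j + 1 (mod 2*b)`, or `y` is odd and `x = y + d j` likewise. -/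
def D3Graph (m b : ℕ) (d : Fin b → ℕ) : SimpleGraph (ZMod (2 * m)) where
  Adj x y := x ≠ y ∧ (d3Rel m b d x y ∨ d3Rel m b d y x)
  symm := by
    refine ⟨?_⟩
    intro x y h
    exact ⟨h.1.symm, h.2.symm⟩
  loopless := by
    refine ⟨?_⟩
    intro x h
    exact h.1 rfl

section Aux

variable {m b : ℕ} {d : Fin b → ℕ}

lemma d3_natCast_inj (hm : 2 ≤ m) {i j : ℕ} (hi : i < 2 * m) (hj : j < 2 * m)
    (h : (i : ZMod (2 * m)) = (j : ZMod (2 * m))) : i = j := by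
  haveI : NeZero (2 * m) := ⟨by omega⟩
  have := congrArg ZMod.val h
  rwa [ZMod.val_natCast, ZMod.val_natCast, Nat.mod_eq_of_lt hi, Nat.mod_eq_of_lt hj] at this

lemma d3_adj_succ (hm : 2 ≤ m) (x : ZMod (2 * m)) : (D3Graph m b d).Adj x (x + 1) := by
  haveI : Fact (1 < 2 * m) := ⟨by omega⟩
  refine ⟨fun h => ?_, Or.inl (Or.inl rfl)⟩
  have : (1 : ZMod (2 * m)) = 0 := by
    have := left_eq_add.mp h
    exact this
  exact one_ne_zero this

/-- A walk of length `k` from `x + k` down to `x` along successor edges. -/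
lemma d3_downWalk (hm : 2 ≤ m) (x : ZMod (2 * m)) (k : ℕ) :
    ∃ w : (D3Graph m b d).Walk (x + (k : ZMod (2 * m))) x,
      w.length = k ∧
      w.support = ((List.range (k + 1)).map (fun i : ℕ => x + (i : ZMod (2 * m)))).reverse ∧
      w.edges = ((List.range k).map
        (fun i : ℕ => s(x + (i : ZMod (2 * m)), x + (i : ZMod (2 * m)) + 1))).reverse := by
  induction k with
  | zero =>
    refine ⟨SimpleGraph.Walk.nil.copy (by simp) rfl, by simp, ?_, by simp⟩
    simp [List.range_succ]
  | succ k ih =>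
    obtain ⟨w, hl, hs, he⟩ := ih
    refine ⟨(SimpleGraph.Walk.cons ((d3_adj_succ hm (x + (k : ZMod (2 * m)))).symm) w).copy
      (by push_cast; ring) rfl, by simp [hl], ?_, ?_⟩
    · simp [hs, List.range_succ]
      push_cast
      ring_nf
    · simp [he, List.range_succ, Sym2.eq_swap]

lemma d3_not_acyclic (hm : 2 ≤ m) (hb : 1 ≤ b)
    (h3 : ∀ j, 3 ≤ d j) (hle : ∀ j, d j ≤ 2 * m - 3) :
    ¬ (D3Graph m b d).IsAcyclic := by
  haveI : NeZero (2 * m) := ⟨by omega⟩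
  set j0 : Fin b := ⟨0, hb⟩
  set D := d j0 with hD
  have hD3 : 3 ≤ D := h3 j0
  have hDle : D ≤ 2 * m - 3 := hle j0
  have hDlt : D < 2 * m := by omega
  -- chord adjacency at 1
  have hval1 : (1 : ZMod (2 * m)).val = 1 := by
    haveI : Fact (1 < 2 * m) := ⟨by omega⟩
    exact ZMod.val_one (2 * m)
  have hchord : (D3Graph m b d).Adj 1 (1 + (D : ZMod (2 * m))) := by
    refine ⟨fun h => ?_, Or.inl (Or.inr ⟨by rw [hval1]; exact ⟨0, rfl⟩, j0, ?_, rfl⟩)⟩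
    · have : (D : ZMod (2 * m)) = 0 := by
        have := left_eq_add.mp h
        exact this
      rw [ZMod.natCast_eq_zero_iff] at this
      have := Nat.le_of_dvd (by omega) this
      omega
    · rw [hval1]
      have : 1 < 2 * b := by omega
      simp [Nat.mod_eq_of_lt this]
      rfl
  obtain ⟨w, hl, hs, he⟩ := d3_downWalk (b := b) (d := d) hm 1 D
  intro hac
  have hcyc : (SimpleGraph.Walk.cons hchord w).IsCycle := by
    rw [SimpleGraph.Walk.cons_isCycle_iff]
    constructor
    · rw [SimpleGraph.Walk.isPath_def, hs, List.nodup_reverse]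
      refine List.Nodup.map_on ?_ List.nodup_range
      intro i hi i' hi' hii
      rw [List.mem_range] at hi hi'
      have : (i : ZMod (2 * m)) = (i' : ZMod (2 * m)) := by
        exact add_left_cancel hii
      exact d3_natCast_inj hm (by omega) (by omega) this
    · rw [he]
      intro hmem
      rw [List.mem_reverse, List.mem_map] at hmem
      obtain ⟨i, hi, hieq⟩ := hmem
      rw [List.mem_range] at hi
      rw [Sym2.eq_iff] at hieq
      rcases hieq with ⟨h1, h2⟩ | ⟨h1, h2⟩
      · have hi0 : (i : ZMod (2 * m)) = ((0 : ℕ) : ZMod (2 * m)) := by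
          have := left_eq_add.mp h1.symm
          simpa using this
        have : i = 0 := d3_natCast_inj hm (by omega) (by omega) hi0
        subst this
        have : (D : ZMod (2 * m)) = ((1 : ℕ) : ZMod (2 * m)) := by
          rw [add_assoc] at h2
          simpa using (add_left_cancel h2).symm
        have := d3_natCast_inj hm hDlt (by omega) this
        omega
      · have : ((i + 1 : ℕ) : ZMod (2 * m)) = 0 := by
          push_cast
          linear_combination h2
        rw [ZMod.natCast_eq_zero_iff] at this
        have := Nat.le_of_dvd (by omega) this
        omega
  exact hac _ hcyc

lemma d3_val_mod_shift (hm : 2 ≤ m) (u x : ZMod (2 * m)) {c : ℕ}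
    (hc : c ∣ 2 * m) (hcu : c ∣ u.val) : (x + u).val % c = x.val % c := by
  haveI : NeZero (2 * m) := ⟨by omega⟩
  obtain ⟨e, he⟩ := hcu
  rw [ZMod.val_add, Nat.mod_mod_of_dvd _ hc, he, Nat.add_mul_mod_self_left]

lemma d3_adj_shift (hm : 2 ≤ m) (hbm : b ∣ m) {u : ZMod (2 * m)} (hu : 2 * b ∣ u.val)
    {x y : ZMod (2 * m)} (hxy : (D3Graph m b d).Adj x y) :
    (D3Graph m b d).Adj (x + u) (y + u) := by
  have h2m : 2 * b ∣ 2 * m := mul_dvd_mul_left 2 hbm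
  have h2u : 2 ∣ u.val := dvd_trans (Dvd.intro b rfl) hu
  have key : ∀ z w : ZMod (2 * m), d3Rel m b d z w → d3Rel m b d (z + u) (w + u) := by
    rintro z w (rfl | ⟨hoz, j, hj, rfl⟩)
    · exact Or.inl (by ring)
    · refine Or.inr ⟨?_, j, ?_, by ring⟩
      · rw [Nat.odd_iff, d3_val_mod_shift hm u z (Dvd.intro m rfl) h2u, ← Nat.odd_iff]
        exact hoz
      · rw [d3_val_mod_shift hm u z h2m hu]
        exact hj
  exact ⟨fun h => hxy.ne (add_right_cancel h),
    hxy.2.imp (key x y) (key y x)⟩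

end Aux

/-- In a D3 graph `G(m, b, d)` with `m ≥ 2`, the girth is realized by a cycle through some
vertex `v` with `v.val < 2*b`. -/
theorem stmt_1 (m b : ℕ) (hm : 2 ≤ m) (hb : 1 ≤ b) (hbm : b ∣ m)
    (d : Fin b → ℕ) (hodd : ∀ j, Odd (d j)) (h3 : ∀ j, 3 ≤ d j)
    (hle : ∀ j, d j ≤ 2 * m - 3) :
    ∃ (v : ZMod (2 * m)) (c : (D3Graph m b d).Walk v v),
      c.IsCycle ∧ (c.length : ℕ∞) = (D3Graph m b d).egirth ∧ v.val < 2 * b := by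
  haveI : NeZero (2 * m) := ⟨by omega⟩
  obtain ⟨a, c0, hc0, hg⟩ :=
    (SimpleGraph.exists_egirth_eq_length (G := D3Graph m b d)).mpr
      (d3_not_acyclic hm hb h3 hle)
  have hble : b ≤ m := Nat.le_of_dvd (by omega) hbm
  have h2bpos : 0 < 2 * b := by omega
  set r := a.val % (2 * b) with hr
  have hrlt : r < 2 * b := Nat.mod_lt _ h2bpos
  have hrle : r ≤ a.val := Nat.mod_le _ _
  have havlt : a.val < 2 * m := ZMod.val_lt a
  have hdvd1 : 2 * b ∣ a.val - r := by
    have := Nat.div_add_mod a.val (2 * b)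
    exact ⟨a.val / (2 * b), by omega⟩
  have h2m : 2 * b ∣ 2 * m := mul_dvd_mul_left 2 hbm
  set s : ℕ := 2 * m - (a.val - r) with hsdef
  have hdvds : 2 * b ∣ s := Nat.dvd_sub h2m hdvd1
  set u : ZMod (2 * m) := ((s : ℕ) : ZMod (2 * m)) with hu
  have hudvd : 2 * b ∣ u.val := by
    rw [hu, ZMod.val_natCast]
    exact (Nat.dvd_mod_iff h2m).mpr hdvds
  -- the shifted vertex
  have hva : a + u = ((r : ℕ) : ZMod (2 * m)) := by
    have ha : ((a.val : ℕ) : ZMod (2 * m)) = a := ZMod.natCast_rightInverse a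
    have : a.val + s = 2 * m + r := by omega
    calc a + u = ((a.val + s : ℕ) : ZMod (2 * m)) := by rw [Nat.cast_add, ha]
    _ = ((2 * m + r : ℕ) : ZMod (2 * m)) := by rw [this]
    _ = ((r : ℕ) : ZMod (2 * m)) := by rw [Nat.cast_add, ZMod.natCast_self, zero_add]
  refine ⟨a + u, c0.map ⟨fun x => x + u, fun h => d3_adj_shift hm hbm hudvd h⟩, ?_, ?_, ?_⟩
  · exact hc0.map (add_left_injective u)
  · rw [SimpleGraph.Walk.length_map]
    exact hg.symm
  · rw [hva, ZMod.val_natCast, Nat.mod_eq_of_lt (by omega)]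
    exact hrlt
end

section
/- For every integer m ≥ 7, the D3 graph G(m, 1, d) of order 2m with symmetry factor b = 1 and single chord index d 0 = 5 has girth 6. Consequently, the D3 chord index 5 yields a 3-regular bipartite Hamiltonian graph of girth 6 for every even order at least 14. -/
namespace D3aux

def pr (m : ℕ) : ZMod (2*m) →+* ZMod 2 := ZMod.castHom ⟨m, rfl⟩ (ZMod 2)

variable {m : ℕ} {d : Fin 1 → ℕ}

lemma pr_odd (hm : 7 ≤ m) (x : ZMod (2*m)) : pr m x = 1 ↔ Odd x.val := by
  haveI : NeZero (2*m) := ⟨by omega⟩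
  have h1 : pr m x = ((x.val : ℕ) : ZMod 2) := by
    simp [pr, ZMod.castHom_apply, ZMod.natCast_val]
  have h2 : x.val = 2 * (x.val / 2) + x.val % 2 := by omega
  have h3 : ((x.val : ℕ) : ZMod 2) = ((x.val % 2 : ℕ) : ZMod 2) := by
    rw [h2]; push_cast; ring_nf; simp [ZMod.natCast_self]; exact Or.inr (by decide)
  rw [h1, h3, Nat.odd_iff]
  rcases Nat.mod_two_eq_zero_or_one x.val with h | h <;> rw [h] <;> simp

lemma pr_int (s : ℤ) : pr m ((s : ZMod (2*m))) = (s : ZMod 2) := by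
  simp [pr]

lemma odd_cast_two {s : ℤ} (hs : Odd s) : (s : ZMod 2) = 1 := by
  obtain ⟨k, rfl⟩ := hs
  push_cast
  ring_nf
  rw [show (2 : ZMod 2) = 0 by decide, mul_zero, add_zero]

lemma cast_nz (hm : 7 ≤ m) (s : ℤ) (hs : s ≠ 0) (h2 : s.natAbs < 2*m) :
    (s : ZMod (2*m)) ≠ 0 := by
  intro h
  rw [ZMod.intCast_zmod_eq_zero_iff_dvd] at h
  have h3 : 2 * m ∣ s.natAbs := by
    have := Int.natAbs_dvd_natAbs.mpr h
    simpa [Int.natAbs_mul] using this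
  have := Nat.le_of_dvd (Int.natAbs_pos.mpr hs) h3
  omega

lemma step (hm : 7 ≤ m) (hd : d 0 = 5) {x y : ZMod (2*m)}
    (hxy : (D3Graph m 1 d).Adj x y) :
    ∃ s : ℤ, y = x + (s : ZMod (2*m)) ∧
      (s = 1 ∨ s = -1 ∨ (s = 5 ∧ Odd x.val) ∨ (s = -5 ∧ Odd y.val)) := by
  obtain ⟨hne, h | h⟩ := hxy <;> rcases h with h | ⟨hodd, j, hj, h⟩
  · exact ⟨1, by rw [h]; norm_num, Or.inl rfl⟩
  · refine ⟨5, ?_, Or.inr (Or.inr (Or.inl ⟨rfl, hodd⟩))⟩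
    rw [h, Fin.fin_one_eq_zero j, hd]; norm_num
  · exact ⟨-1, by rw [h]; push_cast; ring, Or.inr (Or.inl rfl)⟩
  · refine ⟨-5, ?_, Or.inr (Or.inr (Or.inr ⟨rfl, hodd⟩))⟩
    rw [h, Fin.fin_one_eq_zero j, hd]; push_cast; ring

lemma adj_pr (hm : 7 ≤ m) (hd : d 0 = 5) {x y : ZMod (2*m)}
    (hxy : (D3Graph m 1 d).Adj x y) : pr m y = pr m x + 1 := by
  obtain ⟨s, rfl, hs⟩ := step hm hd hxy
  rw [map_add, pr_int, odd_cast_two]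
  rcases hs with rfl | rfl | ⟨rfl, -⟩ | ⟨rfl, -⟩ <;> decide

end D3aux

namespace D3aux

lemma contra2 (hm : 7 ≤ m) (u v : ZMod (2*m)) (h : pr m v = pr m u + 1)
    (hu : Odd u.val) (hv : Odd v.val) : False := by
  rw [← pr_odd hm] at hu hv
  rw [hu, hv] at h
  exact absurd h (by decide)

set_option maxHeartbeats 1000000 in
lemma no4 (hm : 7 ≤ m) (hd : d 0 = 5) {a b c e : ZMod (2*m)}
    (h1 : (D3Graph m 1 d).Adj a b) (h2 : (D3Graph m 1 d).Adj b c)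
    (h3 : (D3Graph m 1 d).Adj c e) (h4 : (D3Graph m 1 d).Adj e a)
    (nca : c ≠ a) (nbe : b ≠ e) : False := by
  obtain ⟨s1, hb, hc1⟩ := step hm hd h1
  obtain ⟨s2, hc, hc2⟩ := step hm hd h2
  obtain ⟨s3, he, hc3⟩ := step hm hd h3
  obtain ⟨s4, ha, hc4⟩ := step hm hd h4
  have q1 : pr m b = pr m a + 1 := adj_pr hm hd h1
  have q2 : pr m c = pr m b + 1 := adj_pr hm hd h2
  have q3 : pr m e = pr m c + 1 := adj_pr hm hd h3
  have q4 : pr m a = pr m e + 1 := adj_pr hm hd h4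
  have hsum : ((s1+s2+s3+s4 : ℤ) : ZMod (2*m)) = 0 := by
    have h0 := ha
    rw [he, hc, hb] at h0
    push_cast
    linear_combination -h0
  have hne12 : ((s1+s2 : ℤ) : ZMod (2*m)) ≠ 0 := by
    intro h0
    apply nca
    rw [hc, hb]
    push_cast at h0
    linear_combination h0
  have hne23 : ((s2+s3 : ℤ) : ZMod (2*m)) ≠ 0 := by
    intro h0
    apply nbe
    rw [he, hc]
    push_cast at h0
    linear_combination -h0
  clear hb hc he ha h1 h2 h3 h4 nca nbe
  rcases hc1 with rfl | rfl | ⟨rfl, ho1⟩ | ⟨rfl, ho1⟩ <;>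
  rcases hc2 with rfl | rfl | ⟨rfl, ho2⟩ | ⟨rfl, ho2⟩ <;>
  rcases hc3 with rfl | rfl | ⟨rfl, ho3⟩ | ⟨rfl, ho3⟩ <;>
  rcases hc4 with rfl | rfl | ⟨rfl, ho4⟩ | ⟨rfl, ho4⟩ <;>
  first
  | (apply hne12; norm_num; done)
  | (apply hne23; norm_num; done)
  | (refine absurd hsum (cast_nz hm _ ?_ ?_) <;> omega)
  | exact contra2 hm _ _ q1 ho1 ho2
  | exact contra2 hm _ _ q2 ho1 ho2
  | exact contra2 hm _ _ q2 ho1 ho3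
  | exact contra2 hm _ _ q2 ho2 ho3
  | exact contra2 hm _ _ q3 ho2 ho3
  | exact contra2 hm _ _ q3 ho2 ho4
  | exact contra2 hm _ _ q3 ho3 ho4
  | exact contra2 hm _ _ q4 ho3 ho4
  | exact contra2 hm _ _ q4 ho3 ho1
  | exact contra2 hm _ _ q4 ho4 ho1
  | exact contra2 hm _ _ q1 ho4 ho1
  | exact contra2 hm _ _ q1 ho4 ho2

lemma adjStep (hm : 7 ≤ m) (x : ZMod (2*m)) : (D3Graph m 1 d).Adj x (x + 1) := by
  refine ⟨?_, Or.inl (Or.inl rfl)⟩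
  intro h
  have h1 : ((1 : ℤ) : ZMod (2*m)) = 0 := by
    have := h.symm
    push_cast
    linear_combination -h
  exact cast_nz hm 1 one_ne_zero (by omega) h1

def upw (m : ℕ) (d : Fin 1 → ℕ) (hm : 7 ≤ m) (x : ZMod (2*m)) :
    (k : ℕ) → (D3Graph m 1 d).Walk x (x + (k : ZMod (2*m)))
  | 0 => SimpleGraph.Walk.nil.copy rfl (by simp)
  | (k+1) => (((upw m d hm x k).concat (adjStep hm (x + k))).copy rfl (by push_cast; ring))

lemma support_upw (hm : 7 ≤ m) (x : ZMod (2*m)) (k : ℕ) :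
    (upw m d hm x k).support = (List.range (k+1)).map (fun i : ℕ => x + (i : ZMod (2*m))) := by
  induction k with
  | zero =>
      show _ = [x + ((0:ℕ) : ZMod (2*m))]
      simp [upw]
  | succ k ih =>
      rw [show (upw m d hm x (k+1)) =
        (((upw m d hm x k).concat (adjStep hm (x + k))).copy rfl (by push_cast; ring)) from rfl]
      rw [SimpleGraph.Walk.support_copy, SimpleGraph.Walk.support_concat, ih,
        List.range_succ, List.map_append]
      simp only [List.map_cons, List.map_nil]
      rw [List.range_succ, List.map_append, List.range_succ, List.map_append]
      simp only [List.map_cons, List.map_nil, List.append_assoc]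
      push_cast
      rw [add_assoc]

lemma edges_upw (hm : 7 ≤ m) (x : ZMod (2*m)) (k : ℕ) :
    (upw m d hm x k).edges
      = (List.range k).map (fun i : ℕ => s(x + (i : ZMod (2*m)), x + (i : ZMod (2*m)) + 1)) := by
  induction k with
  | zero => simp [upw]
  | succ k ih =>
      rw [show (upw m d hm x (k+1)) =
        (((upw m d hm x k).concat (adjStep hm (x + k))).copy rfl (by push_cast; ring)) from rfl]
      rw [SimpleGraph.Walk.edges_copy, SimpleGraph.Walk.edges_concat, ih, List.range_succ]
      simp

lemma length_upw (hm : 7 ≤ m) (x : ZMod (2*m)) (k : ℕ) :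
    (upw m d hm x k).length = k := by
  induction k with
  | zero => simp [upw]
  | succ k ih =>
      rw [show (upw m d hm x (k+1)) =
        (((upw m d hm x k).concat (adjStep hm (x + k))).copy rfl (by push_cast; ring)) from rfl]
      simp [ih]



lemma walk_parity (hm : 7 ≤ m) (hd : d 0 = 5) {u v : ZMod (2*m)}
    (p : (D3Graph m 1 d).Walk u v) : pr m v = pr m u + (p.length : ZMod 2) := by
  induction p with
  | nil => simp
  | cons h p ih =>
      rw [SimpleGraph.Walk.length_cons, ih, adj_pr hm hd h]
      push_cast
      ring

lemma cycle_ge_six (hm : 7 ≤ m) (hd : d 0 = 5) (a : ZMod (2*m))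
    (w : (D3Graph m 1 d).Walk a a) (hw : w.IsCycle) : 6 ≤ w.length := by
  have h3 : 3 ≤ w.length := hw.three_le_length
  have heven : 2 ∣ w.length := by
    have hp := walk_parity hm hd w
    have h0 : ((w.length : ℕ) : ZMod 2) = 0 := by linear_combination -hp
    exact (ZMod.natCast_eq_zero_iff _ _).mp h0
  by_contra hlt
  push_neg at hlt
  have h4 : w.length = 4 := by omega
  clear h3 heven hlt
  cases w with
  | nil => simp at h4
  | cons h1 w1 =>
  cases w1 with
  | nil => simp at h4
  | cons h2 w2 =>
  cases w2 with
  | nil => simp at h4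
  | cons h3' w3 =>
  cases w3 with
  | nil => simp at h4
  | cons h4' w4 =>
  cases w4 with
  | cons h5' w5 => simp [SimpleGraph.Walk.length_cons] at h4
  | nil =>
    have hnd := hw.support_nodup
    simp [SimpleGraph.Walk.support_cons] at hnd
    obtain ⟨⟨nbc, nbe, nba⟩, ⟨nce, nca⟩, nea⟩ := hnd
    exact no4 hm hd h1 h2 h3' h4' nca nbe


lemma num_ne (hm : 7 ≤ m) (i j : ℕ) (hi : i < 2*m) (hj : j < 2*m) (hij : i ≠ j) :
    (i : ZMod (2*m)) ≠ (j : ZMod (2*m)) := by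
  haveI : NeZero (2*m) := ⟨by omega⟩
  intro h
  apply hij
  have := congrArg ZMod.val h
  rwa [ZMod.val_cast_of_lt hi, ZMod.val_cast_of_lt hj] at this

lemma adjNat (hm : 7 ≤ m) (i : ℕ) :
    (D3Graph m 1 d).Adj (i : ZMod (2*m)) ((i+1 : ℕ) : ZMod (2*m)) := by
  have h := adjStep (d := d) hm (i : ZMod (2*m))
  push_cast
  exact h

lemma adj61 (hm : 7 ≤ m) (hd : d 0 = 5) :
    (D3Graph m 1 d).Adj ((6:ℕ) : ZMod (2*m)) ((1:ℕ) : ZMod (2*m)) := by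
  haveI : NeZero (2*m) := ⟨by omega⟩
  refine ⟨num_ne hm 6 1 (by omega) (by omega) (by omega),
    Or.inr (Or.inr ⟨?_, 0, ?_, ?_⟩)⟩
  · rw [ZMod.val_cast_of_lt (by omega : (1:ℕ) < 2*m)]
    decide
  · rw [ZMod.val_cast_of_lt (by omega : (1:ℕ) < 2*m)]
    simp
  · rw [hd]
    push_cast
    norm_num

lemma egirth_eq (hm : 7 ≤ m) (hd : d 0 = 5) : (D3Graph m 1 d).egirth = 6 := by
  haveI : NeZero (2*m) := ⟨by omega⟩
  have a12 := adjNat (d := d) hm 1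
  have a23 := adjNat (d := d) hm 2
  have a34 := adjNat (d := d) hm 3
  have a45 := adjNat (d := d) hm 4
  have a56 := adjNat (d := d) hm 5
  have a61 := adj61 hm hd
  let w6 : (D3Graph m 1 d).Walk ((1:ℕ) : ZMod (2*m)) ((1:ℕ) : ZMod (2*m)) :=
    SimpleGraph.Walk.cons a12 (SimpleGraph.Walk.cons a23 (SimpleGraph.Walk.cons a34
      (SimpleGraph.Walk.cons a45 (SimpleGraph.Walk.cons a56
        (SimpleGraph.Walk.cons a61 SimpleGraph.Walk.nil)))))
  have hnodup : (List.map (Nat.cast : ℕ → ZMod (2*m)) [2,3,4,5,6,1]).Nodup := by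
    refine List.Nodup.map_on ?_ (by decide)
    intro x hx y hy hxy
    by_contra hxyne
    exact num_ne hm x y (by simp at hx; omega) (by simp at hy; omega) hxyne hxy
  have hcyc : w6.IsCycle := by
    rw [SimpleGraph.Walk.cons_isCycle_iff]
    constructor
    · exact SimpleGraph.Walk.IsPath.mk' hnodup
    · intro hmem
      simp only [SimpleGraph.Walk.edges_cons, SimpleGraph.Walk.edges_nil,
        List.mem_cons, List.not_mem_nil, or_false, Sym2.eq, Sym2.rel_iff',
        Prod.mk.injEq, Prod.swap_prod_mk] at hmem
      rcases hmem with (⟨h,-⟩|⟨h,-⟩) | (⟨h,-⟩|⟨h,-⟩) | (⟨h,-⟩|⟨h,-⟩) | (⟨h,-⟩|⟨h,-⟩) | (⟨h,-⟩|⟨-,h⟩)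
      · exact num_ne hm 1 2 (by omega) (by omega) (by omega) h
      · exact num_ne hm 1 3 (by omega) (by omega) (by omega) h
      · exact num_ne hm 1 3 (by omega) (by omega) (by omega) h
      · exact num_ne hm 1 4 (by omega) (by omega) (by omega) h
      · exact num_ne hm 1 4 (by omega) (by omega) (by omega) h
      · exact num_ne hm 1 5 (by omega) (by omega) (by omega) h
      · exact num_ne hm 1 5 (by omega) (by omega) (by omega) h
      · exact num_ne hm 1 6 (by omega) (by omega) (by omega) h
      · exact num_ne hm 1 6 (by omega) (by omega) (by omega) h
      · exact num_ne hm 2 6 (by omega) (by omega) (by omega) h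
  have hlen : w6.length = 6 := rfl
  apply le_antisymm
  · have hle : (D3Graph m 1 d).egirth ≤ (w6.length : ℕ∞) := by
      calc (D3Graph m 1 d).egirth
          ≤ ⨅ (w : (D3Graph m 1 d).Walk ((1:ℕ) : ZMod (2*m)) ((1:ℕ) : ZMod (2*m))),
              ⨅ (_ : w.IsCycle), (w.length : ℕ∞) := iInf_le _ _
        _ ≤ ⨅ (_ : w6.IsCycle), (w6.length : ℕ∞) := iInf_le _ _
        _ ≤ (w6.length : ℕ∞) := iInf_le _ hcyc
    rw [hlen] at hle
    exact_mod_cast hle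
  · rw [SimpleGraph.le_egirth]
    intro a w hw
    have := cycle_ge_six hm hd a w hw
    exact_mod_cast this


lemma zmod2_cases (z : ZMod 2) : z = 0 ∨ z = 1 := by revert z; decide

lemma ncard_neighbors (hm : 7 ≤ m) (hd : d 0 = 5) (v : ZMod (2*m)) :
    {w | (D3Graph m 1 d).Adj v w}.ncard = 3 := by
  haveI : NeZero (2*m) := ⟨by omega⟩
  have hdiff : ∀ (s t : ℤ), s ≠ t → (s-t).natAbs < 2*m →
      v + (s : ZMod (2*m)) ≠ v + (t : ZMod (2*m)) := by
    intro s t hst habs h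
    apply cast_nz hm (s - t) (sub_ne_zero.mpr hst) habs
    push_cast
    linear_combination h
  have hv1 : (D3Graph m 1 d).Adj v (v + ((1:ℤ) : ZMod (2*m))) := by
    have := adjStep (d := d) hm v
    push_cast
    exact this
  have hvm1 : (D3Graph m 1 d).Adj v (v + ((-1:ℤ) : ZMod (2*m))) := by
    refine ⟨?_, Or.inr (Or.inl ?_)⟩
    · intro h
      exact cast_nz hm (-1) (by norm_num) (by omega) (by linear_combination -h)
    · push_cast
      ring
  by_cases hodd : Odd v.val
  · have hv5 : (D3Graph m 1 d).Adj v (v + ((5:ℤ) : ZMod (2*m))) := by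
      refine ⟨?_, Or.inl (Or.inr ⟨hodd, 0, ?_, ?_⟩)⟩
      · intro h
        exact cast_nz hm 5 (by norm_num) (by omega) (by linear_combination -h)
      · simpa using Nat.odd_iff.mp hodd
      · rw [hd]
        push_cast
        ring
    have hset : {w | (D3Graph m 1 d).Adj v w} =
        {v + ((1:ℤ) : ZMod (2*m)), v + ((-1:ℤ) : ZMod (2*m)), v + ((5:ℤ) : ZMod (2*m))} := by
      ext w
      simp only [Set.mem_setOf_eq, Set.mem_insert_iff, Set.mem_singleton_iff]
      constructor
      · intro h
        obtain ⟨s, rfl, hs⟩ := step hm hd h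
        rcases hs with rfl|rfl|⟨rfl,-⟩|⟨rfl,hw⟩
        · exact Or.inl rfl
        · exact Or.inr (Or.inl rfl)
        · exact Or.inr (Or.inr rfl)
        · exact absurd (contra2 hm v _ (adj_pr hm hd h) hodd hw) not_false
      · rintro (rfl|rfl|rfl)
        · exact hv1
        · exact hvm1
        · exact hv5
    rw [hset]
    exact Set.ncard_eq_three.mpr ⟨_, _, _, hdiff 1 (-1) (by norm_num) (by omega),
      hdiff 1 5 (by norm_num) (by omega), hdiff (-1) 5 (by norm_num) (by omega), rfl⟩
  · have hpr0 : pr m v = 0 := by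
      rcases zmod2_cases (pr m v) with h | h
      · exact h
      · exact absurd ((pr_odd hm v).mp h) hodd
    have hoddw : Odd (v + ((-5:ℤ) : ZMod (2*m))).val := by
      refine (pr_odd hm _).mp ?_
      rw [map_add, pr_int, hpr0]
      decide
    have hv5 : (D3Graph m 1 d).Adj v (v + ((-5:ℤ) : ZMod (2*m))) := by
      refine ⟨?_, Or.inr (Or.inr ⟨hoddw, 0, ?_, ?_⟩)⟩
      · intro h
        exact cast_nz hm (-5) (by norm_num) (by omega) (by linear_combination -h)
      · simpa using Nat.odd_iff.mp hoddw
      · rw [hd]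
        push_cast
        ring
    have hset : {w | (D3Graph m 1 d).Adj v w} =
        {v + ((1:ℤ) : ZMod (2*m)), v + ((-1:ℤ) : ZMod (2*m)), v + ((-5:ℤ) : ZMod (2*m))} := by
      ext w
      simp only [Set.mem_setOf_eq, Set.mem_insert_iff, Set.mem_singleton_iff]
      constructor
      · intro h
        obtain ⟨s, rfl, hs⟩ := step hm hd h
        rcases hs with rfl|rfl|⟨rfl,hw⟩|⟨rfl,-⟩
        · exact Or.inl rfl
        · exact Or.inr (Or.inl rfl)
        · exact absurd hw hodd
        · exact Or.inr (Or.inr rfl)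
      · rintro (rfl|rfl|rfl)
        · exact hv1
        · exact hvm1
        · exact hv5
    rw [hset]
    exact Set.ncard_eq_three.mpr ⟨_, _, _, hdiff 1 (-1) (by norm_num) (by omega),
      hdiff 1 (-5) (by norm_num) (by omega), hdiff (-1) (-5) (by norm_num) (by omega), rfl⟩

lemma colorable (hm : 7 ≤ m) (hd : d 0 = 5) : (D3Graph m 1 d).Colorable 2 := by
  have C : (D3Graph m 1 d).Coloring (ZMod 2) := by
    refine SimpleGraph.Coloring.mk (fun v => pr m v) ?_
    intro x y hxy heq
    have := adj_pr hm hd hxy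
    rw [heq] at this
    have h1 : (1 : ZMod 2) = 0 := by linear_combination -this
    exact absurd h1 (by decide)
  simpa using C.colorable


lemma hamiltonian (hm : 7 ≤ m) (hd : d 0 = 5) :
    ∃ (v : ZMod (2 * m)) (c : (D3Graph m 1 d).Walk v v), c.IsHamiltonianCycle := by
  haveI : NeZero (2*m) := ⟨by omega⟩
  have hend : (1 : ZMod (2*m)) + ((2*m-1 : ℕ) : ZMod (2*m)) = 0 := by
    have h2m : ((2*m : ℕ) : ZMod (2*m)) = 0 := ZMod.natCast_self _
    have h1 : ((2*m-1 : ℕ) : ZMod (2*m)) = ((2*m : ℕ) : ZMod (2*m)) - 1 := by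
      rw [Nat.cast_sub (by omega : (1:ℕ) ≤ 2*m)]
      push_cast
      ring
    rw [h1, h2m]
    ring
  let p0 : (D3Graph m 1 d).Walk (1 : ZMod (2*m)) (0 : ZMod (2*m)) :=
    (upw m d hm 1 (2*m-1)).copy rfl hend
  have h01 : (D3Graph m 1 d).Adj (0 : ZMod (2*m)) (1 : ZMod (2*m)) := by
    have := adjStep (d := d) hm (0 : ZMod (2*m))
    simpa using this
  have hsupp : p0.support = (List.range (2*m)).map (fun i : ℕ => 1 + (i : ZMod (2*m))) := by
    rw [show p0 = (upw m d hm 1 (2*m-1)).copy rfl hend from rfl,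
      SimpleGraph.Walk.support_copy, support_upw hm 1 (2*m-1), show 2*m-1+1 = 2*m by omega]
  have hedges : p0.edges = (List.range (2*m-1)).map
      (fun i : ℕ => s((1 : ZMod (2*m)) + (i : ZMod (2*m)), 1 + (i : ZMod (2*m)) + 1)) := by
    rw [show p0 = (upw m d hm 1 (2*m-1)).copy rfl hend from rfl,
      SimpleGraph.Walk.edges_copy, edges_upw hm 1 (2*m-1)]
  have hnodup : p0.support.Nodup := by
    rw [hsupp]
    refine List.Nodup.map_on ?_ List.nodup_range
    intro x hx y hy hxy
    simp only [List.mem_range] at hx hy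
    by_contra hne'
    refine num_ne hm x y hx hy hne' ?_
    have := add_left_cancel hxy
    exact this
  have hnotmem : s((0 : ZMod (2*m)), (1 : ZMod (2*m))) ∉ p0.edges := by
    rw [hedges]
    intro hmem
    simp only [List.mem_map, List.mem_range] at hmem
    obtain ⟨i, hi, heq⟩ := hmem
    rw [Sym2.eq_iff] at heq
    rcases heq with ⟨h1', h2'⟩ | ⟨h1', h2'⟩
    · -- 1 + i = 0 and 1 + i + 1 = 1
      refine num_ne hm (i+1) 0 (by omega) (by omega) (by omega) ?_
      push_cast
      linear_combination h1'
    · -- 1 + i = 1 and 1 + i + 1 = 0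
      have hi0 : i = 0 := by
        by_contra hne'
        refine num_ne hm i 0 (by omega) (by omega) hne' ?_
        push_cast
        linear_combination h1'
      subst hi0
      refine num_ne hm 2 0 (by omega) (by omega) (by omega) ?_
      push_cast
      linear_combination h2'
  refine ⟨0, SimpleGraph.Walk.cons h01 p0, ?_⟩
  rw [SimpleGraph.Walk.isHamiltonianCycle_iff_isCycle_and_support_count_tail_eq_one]
  constructor
  · rw [SimpleGraph.Walk.cons_isCycle_iff]
    exact ⟨SimpleGraph.Walk.IsPath.mk' hnodup, hnotmem⟩
  · intro a
    rw [SimpleGraph.Walk.support_cons]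
    show p0.support.count a = 1
    refine List.count_eq_one_of_mem hnodup ?_
    rw [hsupp]
    simp only [List.mem_map, List.mem_range]
    refine ⟨(a - 1).val, ZMod.val_lt _, ?_⟩
    rw [ZMod.natCast_val, ZMod.cast_id]
    ring

end D3aux

/-- For every `m ≥ 7`, the D3 graph of order `2*m` with symmetry factor `1` and single chord
index `5` has girth `6`; moreover it is 3-regular, bipartite and Hamiltonian. -/
theorem stmt_4 (m : ℕ) (hm : 7 ≤ m) (d : Fin 1 → ℕ) (hd : d 0 = 5) :
    (D3Graph m 1 d).egirth = 6 ∧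
    (∀ v, {w | (D3Graph m 1 d).Adj v w}.ncard = 3) ∧
    (D3Graph m 1 d).Colorable 2 ∧
    (∃ (v : ZMod (2 * m)) (c : (D3Graph m 1 d).Walk v v), c.IsHamiltonianCycle) := by
  exact ⟨D3aux.egirth_eq hm hd, fun v => D3aux.ncard_neighbors hm hd v,
    D3aux.colorable hm hd, D3aux.hamiltonian hm hd⟩
end
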